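/- Let N be a nonzero indecomposable skew-symmetric n×n rational matrix and let A = diag(a_1, …, a_n) be a diagonal rational matrix. If the product N·A is also skew-symmetric, then a_1 = a_2 = ⋯ = a_n, i.e., A is a scalar matrix. -/
import Mathlib


open Matrix

/-- A square matrix is decomposable if there is a nonempty proper subset `S` of the index set
with `A i j = 0` whenever exactly one of `i`, `j` lies in `S` (equivalently, some simultaneous
permutation of rows and columns makes it block-diagonal with at least two blocks). -/
def Decomposable {n R : Type*} [Zero R] (A : Matrix n n R) : Prop :=
  ∃ S : Set n, S.Nonempty ∧ Sᶜ.Nonempty ∧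
    ∀ i j, ((i ∈ S ∧ j ∉ S) ∨ (i ∉ S ∧ j ∈ S)) → A i j = 0

/-- Let `N ≠ 0` be an indecomposable skew-symmetric rational matrix and
`A = diag(a₁, …, aₙ)` a diagonal rational matrix.  If `N * A` is also skew-symmetric,
then all the `aᵢ` are equal, i.e. `A` is a scalar matrix. -/
theorem skew_mul_diagonal_scalar {m : ℕ} (N : Matrix (Fin m) (Fin m) ℚ)
    (hN0 : N ≠ 0) (hind : ¬ Decomposable N) (hskew : Nᵀ = -N)
    (a : Fin m → ℚ)
    (h : (N * Matrix.diagonal a)ᵀ = -(N * Matrix.diagonal a)) :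
    ∀ i j, a i = a j := by
  -- Key: N i j ≠ 0 → a i = a j
  have key : ∀ i j, N i j ≠ 0 → a i = a j := by
    intro i j hNij
    have h1 : N j i * a i = -(N i j * a j) := by
      have := congrFun (congrFun h i) j
      simpa [Matrix.mul_apply, Matrix.diagonal, Matrix.transpose_apply,
        Finset.mul_sum, Matrix.mul_apply] using this
    have h2 : N j i = -N i j := by
      have := congrFun (congrFun hskew i) j
      simpa [Matrix.transpose_apply] using this
    rw [h2] at h1
    have : N i j * a i = N i j * a j := by linarith
    exact mul_left_cancel₀ hNij this
  intro i j
  by_contra hne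
  apply hind
  refine ⟨{k | a k = a j}, ⟨j, rfl⟩, ⟨i, hne⟩, ?_⟩
  intro x y hxy
  by_contra hNxy
  rcases hxy with ⟨hx, hy⟩ | ⟨hx, hy⟩
  · exact hy ((key x y hNxy).symm.trans hx)
  · exact hx ((key x y hNxy).trans hy)
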